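/- Let B be a strictly lower triangular real p×p matrix all of whose entries are nonnegative, let D be a diagonal p×p matrix with strictly positive diagonal entries, set M = (I − B)⁻¹ and Σ = M · D · Mᵀ. Then for every pair of distinct indices r and k one has Σ_{kk} > M_{kr}² · Σ_{rr}. -/
import Mathlib


open Matrix

/-- Proposition 3 of the paper in matrix form: if the strictly lower triangular
edge-weight matrix `B` has nonnegative entries, `D` is the positive diagonal
error covariance, `M = (I - B)⁻¹` and `Σ = M D Mᵀ`, then
`Σ k k > (M k r)² * Σ r r` for all distinct indices `r, k`. -/
theorem variance_gt_of_nonneg_weights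
    {p : ℕ} (B D : Matrix (Fin p) (Fin p) ℝ)
    (hB : ∀ i j : Fin p, i ≤ j → B i j = 0)
    (hBnn : ∀ i j : Fin p, 0 ≤ B i j)
    (hDdiag : ∀ i j : Fin p, i ≠ j → D i j = 0)
    (hDpos : ∀ i : Fin p, 0 < D i i)
    (M : Matrix (Fin p) (Fin p) ℝ) (hM : M = (1 - B)⁻¹)
    (S : Matrix (Fin p) (Fin p) ℝ) (hS : S = M * D * Mᵀ) :
    ∀ r k : Fin p, r ≠ k → S k k > (M k r) ^ 2 * S r r := by
  -- determinant of 1 - B is 1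
  have htri : (1 - B).BlockTriangular OrderDual.toDual := by
    intro i j hij
    have h : (i : Fin p) < j := hij
    simp [Matrix.sub_apply, Matrix.one_apply, h.ne, hB i j h.le]
  have hdet : (1 - B).det = 1 := by
    rw [Matrix.det_of_lowerTriangular _ htri]
    have : ∀ i : Fin p, (1 - B) i i = 1 := by
      intro i; simp [Matrix.sub_apply, Matrix.one_apply, hB i i le_rfl]
    simp [this]
  have hunit : IsUnit (1 - B).det := by rw [hdet]; exact isUnit_one
  have hMB : (1 - B) * M = 1 := by rw [hM]; exact Matrix.mul_nonsing_inv _ hunit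
  have hrec : M = 1 + B * M := by
    have := hMB
    rw [Matrix.sub_mul, Matrix.one_mul] at this
    exact eq_add_of_sub_eq this
  have hentry : ∀ k j : Fin p,
      M k j = (if k = j then (1:ℝ) else 0) + ∑ i, B k i * M i j := by
    intro k j
    conv_lhs => rw [hrec]
    simp [Matrix.add_apply, Matrix.mul_apply, Matrix.one_apply]
  -- nonneg and triangular, by strong induction
  have hkey : ∀ n : ℕ, ∀ k : Fin p, (k : ℕ) = n →
      (∀ j, 0 ≤ M k j) ∧ (∀ j, k < j → M k j = 0) := by
    intro n
    induction n using Nat.strong_induction_on with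
    | _ n ih =>
      intro k hk
      constructor
      · intro j
        rw [hentry]
        have h1 : (0:ℝ) ≤ ∑ i, B k i * M i j := by
          apply Finset.sum_nonneg
          intro i _
          rcases le_or_gt k i with h | h
          · simp [hB k i h]
          · exact mul_nonneg (hBnn k i) ((ih i (hk ▸ h) i rfl).1 j)
        positivity
      · intro j hkj
        rw [hentry]
        rw [if_neg hkj.ne]
        rw [zero_add]
        apply Finset.sum_eq_zero
        intro i _
        rcases le_or_gt k i with h | h
        · simp [hB k i h]
        · rw [(ih i (hk ▸ h) i rfl).2 j (h.trans hkj), mul_zero]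
  have hMnn : ∀ k j : Fin p, 0 ≤ M k j := fun k j => (hkey k k rfl).1 j
  have hMtri : ∀ k j : Fin p, k < j → M k j = 0 := fun k j => (hkey k k rfl).2 j
  have hMdiag : ∀ k : Fin p, M k k = 1 := by
    intro k
    rw [hentry]
    rw [if_pos rfl]
    have : ∑ i, B k i * M i k = 0 := by
      apply Finset.sum_eq_zero
      intro i _
      rcases le_or_gt k i with h | h
      · simp [hB k i h]
      · rw [hMtri i k h, mul_zero]
    rw [this, add_zero]
  intro r k hrk
  -- multiplicative inequality
  have hmult : ∀ n : ℕ, ∀ k : Fin p, (k : ℕ) = n → ∀ j, M k r * M r j ≤ M k j := by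
    intro n
    induction n using Nat.strong_induction_on with
    | _ n ih =>
      intro k hk j
      rcases eq_or_ne k r with h | h
      · subst h; rw [hMdiag k, one_mul]
      · have h1 : M k r = ∑ i, B k i * M i r := by
          rw [hentry, if_neg h, zero_add]
        conv_rhs => rw [hentry k j]
        rw [h1, Finset.sum_mul]
        have h2 : ∑ i, B k i * M i r * M r j ≤ ∑ i, B k i * M i j := by
          apply Finset.sum_le_sum
          intro i _
          rcases le_or_gt k i with hki | hki
          · simp [hB k i hki]
          · rw [mul_assoc]
            exact mul_le_mul_of_nonneg_left (ih i (hk ▸ hki) i rfl j) (hBnn k i)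
        calc ∑ i, B k i * M i r * M r j ≤ ∑ i, B k i * M i j := h2
          _ ≤ (if k = j then (1:ℝ) else 0) + ∑ i, B k i * M i j := by
              by_cases hkj : k = j <;> simp [hkj]
  have hmult' : ∀ k j : Fin p, M k r * M r j ≤ M k j := fun k j => hmult k k rfl j
  -- diagonal of S
  have hSdiag : ∀ k : Fin p, S k k = ∑ j, D j j * M k j ^ 2 := by
    intro k
    rw [hS]
    rw [Matrix.mul_apply]
    apply Finset.sum_congr rfl
    intro j _
    rw [Matrix.mul_apply, Matrix.transpose_apply]
    have : ∑ i, M k i * D i j = M k j * D j j := by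
      rw [Finset.sum_eq_single j]
      · intro i _ hij; rw [hDdiag i j hij, mul_zero]
      · intro hj; exact absurd (Finset.mem_univ j) hj
    rw [this]; ring
  rw [hSdiag, hSdiag, Finset.mul_sum]
  rw [gt_iff_lt, ← sub_pos, ← Finset.sum_sub_distrib]
  apply Finset.sum_pos'
  · intro j _
    have h1 : 0 ≤ M k r * M r j := mul_nonneg (hMnn k r) (hMnn r j)
    have h2 : (M k r * M r j) ^ 2 ≤ M k j ^ 2 := by
      exact pow_le_pow_left₀ h1 (hmult' k j) 2
    have := (hDpos j).le
    nlinarith [this, h2]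
  · refine ⟨k, Finset.mem_univ k, ?_⟩
    have hz : M k r * M r k = 0 := by
      rcases lt_or_gt_of_ne hrk with h | h
      · rw [hMtri r k h, mul_zero]
      · rw [hMtri k r h, zero_mul]
    have h0 : M k r ^ 2 * (D k k * M r k ^ 2) = 0 := by
      have h2 : M k r ^ 2 * M r k ^ 2 = 0 := by rw [← mul_pow, hz]; ring
      calc M k r ^ 2 * (D k k * M r k ^ 2) = D k k * (M k r ^ 2 * M r k ^ 2) := by ring
        _ = 0 := by rw [h2, mul_zero]
    rw [hMdiag k, h0]
    simpa using hDpos k
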